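/- Let F be a field, let A be an r×n matrix over F of rank r and let H be an (n−r)×n matrix over F of rank n−r with A·Hᵀ = 0 (so A is a generator matrix and H a check matrix of an [n,r] linear code). Then there exists an (n−r)×n matrix B over F such that the n×n matrix G obtained by stacking A on top of B is invertible and, writing G⁻¹ = (C | D) with C of size n×r and D of size n×(n−r), one has A·D = 0, D has rank n−r, and the column space of D equals the column space of Hᵀ. Hence every linear block code over a field is equivalent to a unit-derived code. -/

import Mathlib

open Matrix Module Submodule

/-- Every linear block code over a field is equivalent to a unit-derived code:
given a generator matrix `A` of rank `r` and a check matrix `H` of rank `n - r`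
with `A * Hᵀ = 0`, there is a matrix `B` completing `A` to an invertible matrix
`G = [A; B]` whose inverse `(C | D)` satisfies `A * D = 0`, `D` has rank `n - r`,
and the column space of `D` equals the column space of `Hᵀ`. -/
theorem stmt_0 {F : Type*} [Field F] {n r : ℕ} (hr : r ≤ n)
    (A : Matrix (Fin r) (Fin n) F) (H : Matrix (Fin (n - r)) (Fin n) F)
    (hArank : A.rank = r) (hHrank : H.rank = n - r) (hAH : A * H.transpose = 0) :
    ∃ (B : Matrix (Fin (n - r)) (Fin n) F) (V : Matrix (Fin n) (Fin r ⊕ Fin (n - r)) F),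
      Matrix.fromRows A B * V = 1 ∧ V * Matrix.fromRows A B = 1 ∧
      A * V.toCols₂ = 0 ∧ (V.toCols₂).rank = n - r ∧
      LinearMap.range (V.toCols₂).mulVecLin =
        LinearMap.range (H.transpose).mulVecLin := by
  classical
  -- rows of A are linearly independent
  have hAli : LinearIndependent F A := by
    show LinearIndependent F A.row
    rw [linearIndependent_iff_card_eq_finrank_span, Set.finrank,
      ← Matrix.rank_eq_finrank_span_row, hArank, Fintype.card_fin]
  obtain ⟨W, hW⟩ := Submodule.exists_isCompl (Submodule.span F (Set.range A))
  have hspan : finrank F (Submodule.span F (Set.range A)) = r := by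
    show finrank F (Submodule.span F (Set.range A.row)) = r
    rw [← Matrix.rank_eq_finrank_span_row, hArank]
  have hfull : finrank F (Fin n → F) = n := by simp
  have hWrank : finrank F W = n - r := by
    have := Submodule.finrank_add_eq_of_isCompl hW
    rw [hspan, hfull] at this
    omega
  let b : Basis (Fin (n - r)) F W := finBasisOfFinrankEq F W hWrank
  let B : Matrix (Fin (n - r)) (Fin n) F := Matrix.of fun i => (b i : Fin n → F)
  have hBli : LinearIndependent F B := b.linearIndependent.map' W.subtype W.ker_subtype
  have hBspan : Submodule.span F (Set.range B) = W := by
    have h : Set.range B = W.subtype '' Set.range b := by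
      rw [show (B : Fin (n - r) → Fin n → F) = W.subtype ∘ b from rfl, Set.range_comp]
    rw [h, Submodule.span_image, b.span_eq, Submodule.map_top, Submodule.range_subtype]
  have hli : LinearIndependent F (Sum.elim A B) := by
    refine hAli.sum_type hBli ?_
    rw [hBspan]; exact hW.disjoint
  -- the equivalence and square matrix
  let e : Fin n ≃ (Fin r ⊕ Fin (n - r)) :=
    (finCongr (by omega)).trans finSumFinEquiv.symm
  set G : Matrix (Fin r ⊕ Fin (n - r)) (Fin n) F := Matrix.fromRows A B with hG
  have hGrows : ∀ s, G s = Sum.elim A B s := by rintro (i | i) <;> rfl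
  set G' : Matrix (Fin n) (Fin n) F := G.submatrix e id with hG'
  have hG'unit : IsUnit G' := by
    rw [← Matrix.linearIndependent_rows_iff_isUnit]
    have h : (fun i => G' i) = (Sum.elim A B) ∘ e := by
      funext i; rw [show G' i = G (e i) from rfl, hGrows]; rfl
    rw [show G'.row = (fun i => G' i) from rfl, h]
    exact hli.comp e e.injective
  have hdet : IsUnit G'.det := (Matrix.isUnit_iff_isUnit_det G').mp hG'unit
  have h1 : G' * G'⁻¹ = 1 := Matrix.mul_nonsing_inv _ hdet
  have h2 : G'⁻¹ * G' = 1 := Matrix.nonsing_inv_mul _ hdet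
  set V : Matrix (Fin n) (Fin r ⊕ Fin (n - r)) F := G'⁻¹.submatrix id e.symm with hV
  have hGV : G * V = 1 := by
    ext s t
    rw [Matrix.mul_apply]
    have h : ∀ j, G s j * V j t = G' (e.symm s) j * G'⁻¹ j (e.symm t) := fun j => by
      simp [hG', hV]
    simp_rw [h]
    rw [← Matrix.mul_apply, h1, Matrix.one_apply, Matrix.one_apply]
    simp [e.symm.injective.eq_iff]
  have hVG : V * G = 1 := by
    ext i j
    rw [Matrix.mul_apply]
    rw [Fintype.sum_equiv e.symm (fun t => V i t * G t j)
      (fun k => G'⁻¹ i k * G' k j) (fun t => by simp [hG', hV])]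
    rw [← Matrix.mul_apply, h2]
  -- A * D = 0
  have hAD : A * V.toCols₂ = 0 := by
    ext i j
    have h := congrFun (congrFun hGV (Sum.inl i)) (Sum.inr j)
    rw [Matrix.mul_apply] at h
    simp only [hG, Matrix.fromRows_apply_inl] at h
    rw [Matrix.one_apply_ne (by simp)] at h
    simpa [Matrix.mul_apply, Matrix.toCols₂] using h
  -- kernel of A has dimension n - r
  have hkerA : finrank F (LinearMap.ker A.mulVecLin) = n - r := by
    have h := LinearMap.finrank_range_add_finrank_ker A.mulVecLin
    rw [hfull] at h
    have h2 : finrank F (LinearMap.range A.mulVecLin) = r := hArank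
    omega
  -- range of Hᵀ equals kernel of A
  have hHsub : LinearMap.range (H.transpose).mulVecLin ≤ LinearMap.ker A.mulVecLin := by
    rintro x ⟨y, rfl⟩
    have h : A.mulVecLin ((H.transpose).mulVecLin y) = (A * H.transpose).mulVecLin y := by
      rw [Matrix.mulVecLin_mul]; rfl
    rw [LinearMap.mem_ker, h, hAH]
    simp
  have hHrange : LinearMap.range (H.transpose).mulVecLin = LinearMap.ker A.mulVecLin := by
    refine Submodule.eq_of_le_of_finrank_eq hHsub ?_
    rw [show finrank F (LinearMap.range (H.transpose).mulVecLin) = (H.transpose).rank from rfl,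
      Matrix.rank_transpose, hHrank, hkerA]
  -- range of D equals kernel of A
  have hDsub : LinearMap.range (V.toCols₂).mulVecLin ≤ LinearMap.ker A.mulVecLin := by
    rintro x ⟨y, rfl⟩
    have h : A.mulVecLin ((V.toCols₂).mulVecLin y) = (A * V.toCols₂).mulVecLin y := by
      rw [Matrix.mulVecLin_mul]; rfl
    rw [LinearMap.mem_ker, h, hAD]
    simp
  have hkersub : LinearMap.ker A.mulVecLin ≤ LinearMap.range (V.toCols₂).mulVecLin := by
    intro x hx
    have hx' : A *ᵥ x = 0 := hx
    have hxeq : V *ᵥ (G *ᵥ x) = x := by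
      rw [Matrix.mulVec_mulVec, hVG, Matrix.one_mulVec]
    rw [hG, Matrix.fromRows_mulVec, hx'] at hxeq
    refine ⟨B *ᵥ x, ?_⟩
    have hVcols : V = Matrix.fromCols V.toCols₁ V.toCols₂ :=
      (Matrix.fromCols_toCols V).symm
    rw [hVcols, show (0 : Fin r → F) = Sum.elim (0 : Fin r → F) (B *ᵥ x) ∘ Sum.inl from rfl]
      at hxeq
    rw [show Sum.elim (0 : Fin r → F) (B *ᵥ x) ∘ Sum.inl = (0 : Fin r → F) from rfl] at hxeq
    rw [Matrix.fromCols_mulVec_sumElim, Matrix.mulVec_zero, zero_add] at hxeq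
    exact hxeq
  have hDrange : LinearMap.range (V.toCols₂).mulVecLin = LinearMap.ker A.mulVecLin :=
    le_antisymm hDsub hkersub
  refine ⟨B, V, hGV, hVG, hAD, ?_, ?_⟩
  · rw [show (V.toCols₂).rank
      = finrank F (LinearMap.range (V.toCols₂).mulVecLin) from rfl, hDrange, hkerA]
  · rw [hDrange, hHrange]
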